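/- If X is a connected regular graph and a, b are fractionally cospectral vertices with parameters p, q, then a and b are cospectral (p = ±q). -/

import Mathlib

open Matrix

/-- In a connected `k`-regular graph, any eigenvector for eigenvalue `k` is constant. -/
lemma eig_const_aux {n k : ℕ} (G : SimpleGraph (Fin n)) [DecidableRel G.Adj]
    (hconn : G.Connected) (hreg : G.IsRegularOfDegree k)
    (v : Fin n → ℝ) (hv : G.adjMatrix ℝ *ᵥ v = (k : ℝ) • v) :
    ∀ i j, v i = v j := by
  have hne : Nonempty (Fin n) := hconn.nonempty
  obtain ⟨a0, -, hmax⟩ := Finset.exists_max_image Finset.univ v Finset.univ_nonempty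
  have hmax' : ∀ u, v u ≤ v a0 := fun u => hmax u (Finset.mem_univ u)
  have key : ∀ i, v i = v a0 → ∀ j, G.Adj i j → v j = v a0 := by
    intro i hi j hij
    by_contra hne'
    have hlt : v j < v a0 := lt_of_le_of_ne (hmax' j) hne'
    have hsum : ∑ u ∈ G.neighborFinset i, v u = (k : ℝ) * v a0 := by
      have := congrFun hv i
      simpa [hi] using this
    have hcard : (G.neighborFinset i).card = k := hreg i
    have hstrict : ∑ u ∈ G.neighborFinset i, v u < ∑ _u ∈ G.neighborFinset i, v a0 :=
      Finset.sum_lt_sum (fun u _ => hmax' u)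
        ⟨j, (G.mem_neighborFinset i j).2 hij, hlt⟩
    rw [Finset.sum_const, hcard, nsmul_eq_mul] at hstrict
    rw [hsum] at hstrict
    exact lt_irrefl _ hstrict
  have walkstep : ∀ (i j : Fin n) (_ : G.Walk i j), v i = v a0 → v j = v a0 := by
    intro i j w
    induction w with
    | nil => exact id
    | cons h w ih => intro hi; exact ih (key _ hi _ h)
  have hall : ∀ j, v j = v a0 := by
    intro j
    obtain ⟨w⟩ := hconn a0 j
    exact walkstep a0 j w rfl
  intro i j; rw [hall i, hall j]

/-- In a connected regular graph, fractionally cospectral vertices are in fact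
cospectral (the parameters satisfy `p = ±q`). -/
theorem regular_fractionally_cospectral_implies_cospectral {n d k : ℕ}
    (G : SimpleGraph (Fin n)) [DecidableRel G.Adj]
    (hconn : G.Connected) (hreg : G.IsRegularOfDegree k)
    (θ : Fin (d + 1) → ℝ) (E : Fin (d + 1) → Matrix (Fin n) (Fin n) ℝ)
    (hA : G.adjMatrix ℝ = ∑ r, θ r • E r) (hθ : Function.Injective θ)
    (hsymm : ∀ r, (E r).IsSymm)
    (hidem : ∀ r, E r * E r = E r)
    (horth : ∀ r s, r ≠ s → E r * E s = 0)
    (hsum : ∑ r, E r = 1)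
    (a b : Fin n) (hab : a ≠ b)
    (p q : ℝ) (hp : p ≠ 0) (hq : q ≠ 0) (hpq : p ^ 2 + q ^ 2 = 1)
    (hfc : ∀ r, E r a a - E r b b = (p / q - q / p) * E r a b) :
    (p = q ∨ p = -q) ∧ ∀ r, E r a a = E r b b := by
  set u : Fin n → ℝ := fun _ => 1 with hu
  -- A * E r = θ r • E r  and  E r * A = θ r • E r
  have hAE : ∀ r, G.adjMatrix ℝ * E r = θ r • E r := by
    intro r
    rw [hA, Finset.sum_mul]
    rw [Finset.sum_eq_single r]
    · rw [smul_mul_assoc, hidem r]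
    · intro s _ hs
      rw [smul_mul_assoc, horth s r hs, smul_zero]
    · intro h; exact absurd (Finset.mem_univ r) h
  have hEA : ∀ r, E r * G.adjMatrix ℝ = θ r • E r := by
    intro r
    rw [hA, Finset.mul_sum]
    rw [Finset.sum_eq_single r]
    · rw [mul_smul_comm, hidem r]
    · intro s _ hs
      rw [mul_smul_comm, horth r s (Ne.symm hs), smul_zero]
    · intro h; exact absurd (Finset.mem_univ r) h
  -- A *ᵥ u = k • u
  have hAu : G.adjMatrix ℝ *ᵥ u = (k : ℝ) • u := by
    funext i
    have : (G.adjMatrix ℝ *ᵥ Function.const _ (1:ℝ)) i = (k:ℝ) * 1 :=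
      SimpleGraph.adjMatrix_mulVec_const_apply_of_regular hreg
    simpa [hu, Function.const] using this
  -- (k - θ r) • (E r *ᵥ u) = 0
  have hstep : ∀ r, ((k : ℝ) - θ r) • (E r *ᵥ u) = 0 := by
    intro r
    have h1 : E r *ᵥ (G.adjMatrix ℝ *ᵥ u) = (k : ℝ) • (E r *ᵥ u) := by
      rw [hAu, mulVec_smul]
    have h2 : E r *ᵥ (G.adjMatrix ℝ *ᵥ u) = θ r • (E r *ᵥ u) := by
      rw [mulVec_mulVec, hEA r, smul_mulVec]
    rw [sub_smul, ← h1, h2, sub_self]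
  -- sum of E r *ᵥ u = u
  have hsumvec : ∑ r, E r *ᵥ u = u := by
    have h1 : ∑ r, E r *ᵥ u = (∑ r, E r) *ᵥ u := by
      funext i
      simp only [Finset.sum_apply, mulVec, dotProduct, Matrix.sum_apply, Finset.sum_mul]
      rw [Finset.sum_comm]
    rw [h1, hsum, one_mulVec]
  -- existence of r0 with θ r0 = k
  have hex : ∃ r0, θ r0 = (k : ℝ) := by
    by_contra hno
    push_neg at hno
    have hz : ∀ r, E r *ᵥ u = 0 := by
      intro r
      have := hstep r
      rcases smul_eq_zero.mp this with h | h
      · exact absurd (by linarith [sub_eq_zero.mp h] : θ r = (k:ℝ)) (hno r)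
      · exact h
    have : (∑ r, E r *ᵥ u) a = u a := congrFun hsumvec a
    simp only [Finset.sum_apply] at this
    simp only [hz, Pi.zero_apply, Finset.sum_const_zero] at this
    simp [hu] at this
  obtain ⟨r0, hr0⟩ := hex
  set W := E r0 with hW
  -- for r ≠ r0, E r *ᵥ u = 0
  have hzero : ∀ r, r ≠ r0 → E r *ᵥ u = 0 := by
    intro r hr
    have := hstep r
    rcases smul_eq_zero.mp this with h | h
    · exfalso
      have : θ r = (k : ℝ) := by linarith [sub_eq_zero.mp h]
      exact hr (hθ (this.trans hr0.symm))
    · exact h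
  have hWu : W *ᵥ u = u := by
    have := Finset.sum_eq_single (f := fun r => E r *ᵥ u) r0
      (fun s _ hs => hzero s hs) (fun h => absurd (Finset.mem_univ r0) h)
    beta_reduce at this
    show E r0 *ᵥ u = u
    rw [← this]; exact hsumvec
  -- columns of W are constant
  have hcol : ∀ (j i i' : Fin n), W i j = W i' j := by
    intro j
    set col : Fin n → ℝ := fun i => W i j with hcoldef
    have hv : G.adjMatrix ℝ *ᵥ col = (k : ℝ) • col := by
      funext i
      have h1 : (G.adjMatrix ℝ *ᵥ col) i = (G.adjMatrix ℝ * W) i j := by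
        rw [mulVec, mul_apply]; rfl
      rw [h1, hAE r0, hr0]
      simp [hcoldef, hW]
    exact eig_const_aux G hconn hreg col hv
  -- W a a = W a b = W b b
  have hsymm0 : ∀ i j, W i j = W j i := fun i j => (hsymm r0).apply j i
  have h1 : W a b = W b b := hcol b a b
  have h2 : W a a = W a b := by rw [hsymm0 a b]; exact hcol a a b
  -- W b b ≠ 0
  have hrow : ∀ j, W b j = W b b := by
    intro j
    rw [hsymm0 b j]
    exact hcol b j b
  have hWbb : (n : ℝ) * W b b = 1 := by
    have := congrFun hWu b
    rw [mulVec] at this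
    simp only [hu, dotProduct, mul_one] at this
    calc (n : ℝ) * W b b = ∑ _j : Fin n, W b b := by
          rw [Finset.sum_const, Finset.card_univ, Fintype.card_fin, nsmul_eq_mul]
      _ = ∑ j, W b j := by exact Finset.sum_congr rfl fun j _ => (hrow j).symm
      _ = 1 := this
  have hWbb0 : W b b ≠ 0 := by
    intro h; rw [h, mul_zero] at hWbb; exact one_ne_zero hWbb.symm
  -- conclude c = 0
  have hc : p / q - q / p = 0 := by
    have := hfc r0
    rw [← hW] at this
    rw [h2, h1, sub_self] at this
    have hWab : W a b ≠ 0 := by rw [h1]; exact hWbb0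
    rcases mul_eq_zero.mp this.symm with h | h
    · exact h
    · rw [h1] at hWab; exact absurd h hWab
  have hpq2 : p ^ 2 = q ^ 2 := by
    have h := sub_eq_zero.mp hc
    field_simp at h
    nlinarith [h]
  constructor
  · have : (p - q) * (p + q) = 0 := by nlinarith [hpq2]
    rcases mul_eq_zero.mp this with h | h
    · exact Or.inl (sub_eq_zero.mp h)
    · exact Or.inr (by linarith)
  · intro r
    have := hfc r
    rw [hc, zero_mul] at this
    linarith [this]
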